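/- For n ≥ 3 agents, the assignment matrix produced by Probabilistic Serial admits a decomposition such that for every ordered pair of agents (i, i'), the probability that i envies i' is at most (n−2)/(n−1). -/

import Mathlib

/-- A doubly stochastic assignment matrix: nonnegative entries, each row and column sums to 1. -/
def DoublyStochastic (n : ℕ) (P : Fin n → Fin n → ℝ) : Prop :=
  (∀ i o, 0 ≤ P i o) ∧ (∀ i, ∑ o, P i o = 1) ∧ (∀ o, ∑ i, P i o = 1)

/-- SD-envy-freeness: `rank i o` is the position of object `o` in agent `i`'s strict
preference (smaller = more preferred). For all agents `i, i'` and objects `o`, the mass agent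
`i` gets on objects weakly preferred (by `i`) to `o` is at least the mass `i'` gets there. -/
def SDEF (n : ℕ) (rank : Fin n → Equiv.Perm (Fin n)) (P : Fin n → Fin n → ℝ) : Prop :=
  ∀ i i' o : Fin n,
    ∑ o' ∈ Finset.univ.filter (fun o' => rank i o' ≤ rank i o), P i' o' ≤
    ∑ o' ∈ Finset.univ.filter (fun o' => rank i o' ≤ rank i o), P i o'

/-- A decomposition of an assignment matrix: a probability distribution over deterministic
assignments (permutations `σ`, where `σ i` is the object of agent `i`) whose marginals are `P`. -/
def IsDecomposition (n : ℕ) (P : Fin n → Fin n → ℝ) (w : Equiv.Perm (Fin n) → ℝ) : Prop :=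
  (∀ σ, 0 ≤ w σ) ∧ (∑ σ, w σ = 1) ∧
  ∀ i o, ∑ σ ∈ Finset.univ.filter (fun σ : Equiv.Perm (Fin n) => σ i = o), w σ = P i o

/-- The probability, under the distribution `w` over deterministic assignments, that agent `i`
envies agent `i'` (i.e. strictly prefers `i'`'s object to her own). -/
def envyProb (n : ℕ) (rank : Fin n → Equiv.Perm (Fin n)) (w : Equiv.Perm (Fin n) → ℝ)
    (i i' : Fin n) : ℝ :=
  ∑ σ ∈ Finset.univ.filter (fun σ : Equiv.Perm (Fin n) => rank i (σ i') < rank i (σ i)), w σ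
/-- One run of the Probabilistic Serial (simultaneous eating) algorithm, implemented with a
step counter (\`fuel\`). State: the set \`avail\` of not-yet-exhausted objects and the remaining
fraction \`x o\` of each object. In each step every agent eats her most preferred available
object at unit speed; the step lasts until some object is exhausted; the fractions eaten are
accumulated. The matrix entry (i, o) is the total amount of object o eaten by agent i. -/
noncomputable def psAux (n : ℕ) (rank : Fin n → Equiv.Perm (Fin n)) :
    ℕ → Finset (Fin n) → (Fin n → ℝ) → Fin n → Fin n → ℝ
  | 0, _, _ => fun _ _ => 0
  | fuel + 1, avail, x =>
    if h : avail.Nonempty then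
      let fav : Fin n → Fin n := fun i =>
        (rank i).symm ((avail.image (rank i)).min' (h.image _))
      let rate : Fin n → ℕ := fun o => (Finset.univ.filter fun i => fav i = o).card
      let cands := avail.filter fun o => 0 < rate o
      if hc : cands.Nonempty then
        let T : ℝ := (cands.image fun o => x o / (rate o : ℝ)).min' (hc.image _)
        let newx : Fin n → ℝ := fun o => x o - T * (rate o : ℝ)
        fun i o => (if fav i = o then T else 0) +
          psAux n rank fuel (avail.filter fun o' => 0 < newx o') newx i o
      else fun _ _ => 0
    else fun _ _ => 0

/-- The assignment matrix produced by Probabilistic Serial: run the eating algorithm from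
full objects; at most n steps occur since each step exhausts at least one object. -/
noncomputable def psMatrix (n : ℕ) (rank : Fin n → Equiv.Perm (Fin n)) :
    Fin n → Fin n → ℝ :=
  psAux n rank n Finset.univ fun _ => 1


set_option maxHeartbeats 1000000

namespace PS
variable (n : ℕ) (rank : Fin n → Equiv.Perm (Fin n))

noncomputable def favD (avail : Finset (Fin n)) (i : Fin n) : Fin n :=
  if h : avail.Nonempty then (rank i).symm ((avail.image (rank i)).min' (h.image _)) else i

noncomputable def rateD (avail : Finset (Fin n)) (o : Fin n) : ℕ :=
  (Finset.univ.filter fun i => favD n rank avail i = o).card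

noncomputable def candsD (avail : Finset (Fin n)) : Finset (Fin n) :=
  avail.filter fun o => 0 < rateD n rank avail o

noncomputable def TD (avail : Finset (Fin n)) (x : Fin n → ℝ) : ℝ :=
  if hc : (candsD n rank avail).Nonempty then
    ((candsD n rank avail).image fun o => x o / (rateD n rank avail o : ℝ)).min' (hc.image _)
  else 0

noncomputable def newxD (avail : Finset (Fin n)) (x : Fin n → ℝ) : Fin n → ℝ :=
  fun o => x o - TD n rank avail x * (rateD n rank avail o : ℝ)

noncomputable def nextAvailD (avail : Finset (Fin n)) (x : Fin n → ℝ) : Finset (Fin n) :=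
  avail.filter fun o' => 0 < newxD n rank avail x o'

lemma psAux_step (fuel : ℕ) (avail : Finset (Fin n)) (x : Fin n → ℝ)
    (h : avail.Nonempty) (hc : (candsD n rank avail).Nonempty) :
    psAux n rank (fuel+1) avail x = fun i o =>
      (if favD n rank avail i = o then TD n rank avail x else 0) +
        psAux n rank fuel (nextAvailD n rank avail x) (newxD n rank avail x) i o := by
  have hc' : (avail.filter fun o =>
      0 < (Finset.univ.filter fun i =>
        (rank i).symm ((avail.image (rank i)).min' (h.image _)) = o).card).Nonempty := by
    simpa [candsD, rateD, favD, dif_pos h] using hc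
  rw [psAux, dif_pos h]
  dsimp only
  rw [dif_pos hc']
  funext i o
  simp only [nextAvailD, newxD, TD, candsD, rateD, favD, dif_pos h, dif_pos hc']
  congr 1
  refine congrFun (congrFun (congrArg (psAux n rank fuel _) ?_) i) o
  funext o'
  simp only [newxD, TD, candsD, rateD, favD, dif_pos h, dif_pos hc']

lemma psAux_not_nonempty (fuel : ℕ) (avail : Finset (Fin n)) (x : Fin n → ℝ)
    (h : ¬ avail.Nonempty) :
    psAux n rank (fuel+1) avail x = fun _ _ => 0 := by
  rw [psAux, dif_neg h]

lemma favD_mem (avail : Finset (Fin n)) (h : avail.Nonempty) (i : Fin n) :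
    favD n rank avail i ∈ avail := by
  rw [favD, dif_pos h]
  have hm := Finset.min'_mem (avail.image (rank i)) (h.image _)
  obtain ⟨a, ha, hae⟩ := Finset.mem_image.1 hm
  rw [← hae, Equiv.symm_apply_apply]; exact ha

lemma favD_min (avail : Finset (Fin n)) (h : avail.Nonempty) (i : Fin n)
    (a : Fin n) (ha : a ∈ avail) : rank i (favD n rank avail i) ≤ rank i a := by
  rw [favD, dif_pos h, Equiv.apply_symm_apply]
  exact Finset.min'_le _ _ (Finset.mem_image_of_mem _ ha)

lemma favD_lt (avail : Finset (Fin n)) (h : avail.Nonempty) (i : Fin n)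
    (a : Fin n) (ha : a ∈ avail) (hne : a ≠ favD n rank avail i) :
    rank i (favD n rank avail i) < rank i a :=
  lt_of_le_of_ne (favD_min n rank avail h i a ha)
    (fun hco => hne ((rank i).injective hco.symm))

lemma rateD_eq_zero (avail : Finset (Fin n)) (h : avail.Nonempty) (o : Fin n)
    (ho : o ∉ avail) : rateD n rank avail o = 0 := by
  rw [rateD, Finset.card_eq_zero, Finset.filter_eq_empty_iff]
  exact fun i _ heq => ho (heq ▸ favD_mem n rank avail h i)

lemma candsD_nonempty (hn : 0 < n) (avail : Finset (Fin n)) (h : avail.Nonempty) :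
    (candsD n rank avail).Nonempty := by
  refine ⟨favD n rank avail ⟨0, hn⟩, ?_⟩
  rw [candsD, Finset.mem_filter]
  refine ⟨favD_mem n rank avail h _, Finset.card_pos.2 ⟨⟨0, hn⟩, ?_⟩⟩
  simp

lemma sum_rateD : ∑ o, rateD n rank avail o = n := by
  have h := Finset.card_eq_sum_card_fiberwise
    (s := (Finset.univ : Finset (Fin n))) (t := Finset.univ) (f := favD n rank avail)
    (fun x _ => Finset.mem_univ _)
  simpa [rateD, Finset.card_univ] using h.symm

lemma TD_mem (avail : Finset (Fin n)) (x : Fin n → ℝ) (hc : (candsD n rank avail).Nonempty) :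
    ∃ o ∈ candsD n rank avail, TD n rank avail x = x o / (rateD n rank avail o : ℝ) := by
  rw [TD, dif_pos hc]
  have hm := Finset.min'_mem ((candsD n rank avail).image fun o => x o / (rateD n rank avail o : ℝ))
    (hc.image _)
  obtain ⟨o, ho, hoe⟩ := Finset.mem_image.1 hm
  exact ⟨o, ho, hoe.symm⟩

lemma TD_le (avail : Finset (Fin n)) (x : Fin n → ℝ) (hc : (candsD n rank avail).Nonempty)
    (o : Fin n) (ho : o ∈ candsD n rank avail) :
    TD n rank avail x ≤ x o / (rateD n rank avail o : ℝ) := by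
  rw [TD, dif_pos hc]
  exact Finset.min'_le _ _ (Finset.mem_image_of_mem _ ho)

lemma TD_pos (avail : Finset (Fin n)) (x : Fin n → ℝ) (hx : ∀ o ∈ avail, 0 < x o)
    (hc : (candsD n rank avail).Nonempty) : 0 < TD n rank avail x := by
  obtain ⟨o, ho, he⟩ := TD_mem n rank avail x hc
  obtain ⟨hoav, hr⟩ := Finset.mem_filter.1 ho
  rw [he]
  exact div_pos (hx o hoav) (by exact_mod_cast hr)

lemma newxD_nonneg (avail : Finset (Fin n)) (x : Fin n → ℝ) (hx : ∀ o ∈ avail, 0 < x o)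
    (hc : (candsD n rank avail).Nonempty) (o : Fin n) (ho : o ∈ avail) :
    0 ≤ newxD n rank avail x o := by
  rw [newxD]
  by_cases hr : 0 < rateD n rank avail o
  · have hoc : o ∈ candsD n rank avail := Finset.mem_filter.2 ⟨ho, hr⟩
    have hle := TD_le n rank avail x hc o hoc
    have hrr : (0:ℝ) < (rateD n rank avail o : ℝ) := by exact_mod_cast hr
    rw [sub_nonneg]
    calc TD n rank avail x * (rateD n rank avail o : ℝ)
        ≤ (x o / (rateD n rank avail o : ℝ)) * (rateD n rank avail o : ℝ) := by
          exact mul_le_mul_of_nonneg_right hle hrr.le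
      _ = x o := div_mul_cancel₀ _ hrr.ne'
  · have h0 : rateD n rank avail o = 0 := Nat.le_zero.mp (not_lt.1 hr)
    rw [h0]
    simp [(hx o ho).le]

lemma exists_exhaust (avail : Finset (Fin n)) (x : Fin n → ℝ)
    (hc : (candsD n rank avail).Nonempty) :
    ∃ o ∈ candsD n rank avail, newxD n rank avail x o = 0 := by
  obtain ⟨o, ho, he⟩ := TD_mem n rank avail x hc
  have hr : 0 < rateD n rank avail o := (Finset.mem_filter.1 ho).2
  have hrr : ((rateD n rank avail o : ℝ)) ≠ 0 := by positivity
  refine ⟨o, ho, ?_⟩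
  rw [newxD, he, div_mul_cancel₀ _ hrr, sub_self]

lemma nextAvailD_card (avail : Finset (Fin n)) (x : Fin n → ℝ)
    (hc : (candsD n rank avail).Nonempty) :
    (nextAvailD n rank avail x).card < avail.card := by
  obtain ⟨o, ho, he⟩ := exists_exhaust n rank avail x hc
  have hoav : o ∈ avail := (Finset.mem_filter.1 ho).1
  apply Finset.card_lt_card
  unfold nextAvailD
  rw [Finset.ssubset_iff_of_subset (Finset.filter_subset _ _)]
  exact ⟨o, hoav, by simp [he]⟩

lemma psAux_zero_out (hn : 0 < n) :
    ∀ (fuel : ℕ) (avail : Finset (Fin n)) (x : Fin n → ℝ) (o : Fin n), o ∉ avail → ∀ i,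
      psAux n rank fuel avail x i o = 0 := by
  intro fuel
  induction fuel with
  | zero => intro avail x o ho i; rfl
  | succ fuel ih =>
    intro avail x o ho i
    by_cases h : avail.Nonempty
    · rw [psAux_step n rank fuel avail x h (candsD_nonempty n rank hn avail h)]
      dsimp only
      have h1 : favD n rank avail i ≠ o := fun he => ho (he ▸ favD_mem n rank avail h i)
      have hsub : nextAvailD n rank avail x ⊆ avail := Finset.filter_subset _ _
      rw [if_neg h1, zero_add]
      exact ih _ _ o (fun hno => ho (hsub hno)) i
    · rw [psAux_not_nonempty n rank fuel avail x h]

lemma psAux_nonneg (hn : 0 < n) :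
    ∀ (fuel : ℕ) (avail : Finset (Fin n)) (x : Fin n → ℝ), (∀ o ∈ avail, 0 < x o) → ∀ i o,
      0 ≤ psAux n rank fuel avail x i o := by
  intro fuel
  induction fuel with
  | zero => intro avail x hx i o; exact le_refl 0
  | succ fuel ih =>
    intro avail x hx i o
    by_cases h : avail.Nonempty
    · have hc := candsD_nonempty n rank hn avail h
      rw [psAux_step n rank fuel avail x h hc]
      refine add_nonneg ?_ (ih _ _ (fun o' ho' => (Finset.mem_filter.1 ho').2) i o)
      split
      · exact (TD_pos n rank avail x hx hc).le
      · exact le_refl 0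
    · rw [psAux_not_nonempty n rank fuel avail x h]

lemma sum_rateD_avail (avail : Finset (Fin n)) (h : avail.Nonempty) :
    ∑ o ∈ avail, (rateD n rank avail o : ℝ) = (n : ℝ) := by
  have h0 : ∑ o ∈ avail, rateD n rank avail o = ∑ o, rateD n rank avail o :=
    Finset.sum_subset (Finset.subset_univ _)
      (fun o _ ho => rateD_eq_zero n rank avail h o ho)
  rw [← Nat.cast_sum, h0, sum_rateD]

lemma psAux_row (hn : 0 < n) :
    ∀ (fuel : ℕ) (avail : Finset (Fin n)) (x : Fin n → ℝ), avail.card ≤ fuel →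
      (∀ o ∈ avail, 0 < x o) → ∀ i,
      ∑ o, psAux n rank fuel avail x i o = (∑ o ∈ avail, x o) / n := by
  intro fuel
  induction fuel with
  | zero =>
    intro avail x hcard hx i
    have : avail = ∅ := Finset.card_eq_zero.1 (Nat.le_zero.1 hcard)
    subst this
    simp [psAux]
  | succ fuel ih =>
    intro avail x hcard hx i
    by_cases h : avail.Nonempty
    · have hc := candsD_nonempty n rank hn avail h
      rw [psAux_step n rank fuel avail x h hc]
      rw [Finset.sum_add_distrib]
      have h1 : ∑ o, (if favD n rank avail i = o then TD n rank avail x else 0)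
          = TD n rank avail x := by
        simp
      have h2 : ∑ o, psAux n rank fuel (nextAvailD n rank avail x) (newxD n rank avail x) i o
          = (∑ o ∈ nextAvailD n rank avail x, newxD n rank avail x o) / n :=
        ih _ _ (Nat.lt_succ_iff.1 (lt_of_lt_of_le (nextAvailD_card n rank avail x hc) hcard))
          (fun o ho => (Finset.mem_filter.1 ho).2) i
      rw [h1, h2]
      have hsub : ∑ o ∈ nextAvailD n rank avail x, newxD n rank avail x o
          = ∑ o ∈ avail, newxD n rank avail x o := by
        refine Finset.sum_subset (Finset.filter_subset _ _) (fun o ho hno => ?_)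
        have hge := newxD_nonneg n rank avail x hx hc o ho
        have hle : ¬ 0 < newxD n rank avail x o := fun hpos =>
          hno (Finset.mem_filter.2 ⟨ho, hpos⟩)
        linarith [lt_or_eq_of_le hge]
      have hsum2 : ∑ o ∈ avail, newxD n rank avail x o
          = (∑ o ∈ avail, x o) - TD n rank avail x * n := by
        rw [show (fun o => newxD n rank avail x o) = fun o => x o - TD n rank avail x * (rateD n rank avail o : ℝ) from rfl]
        rw [Finset.sum_sub_distrib, ← Finset.mul_sum, sum_rateD_avail n rank avail h]
      rw [hsub, hsum2]
      have hn' : (n:ℝ) ≠ 0 := by positivity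
      field_simp
      ring
    · rw [psAux_not_nonempty n rank fuel avail x h,
        Finset.not_nonempty_iff_eq_empty.1 h]
      simp
lemma psAux_col (hn : 0 < n) :
    ∀ (fuel : ℕ) (avail : Finset (Fin n)) (x : Fin n → ℝ), avail.card ≤ fuel →
      (∀ o ∈ avail, 0 < x o) → ∀ o,
      ∑ i, psAux n rank fuel avail x i o = if o ∈ avail then x o else 0 := by
  intro fuel
  induction fuel with
  | zero =>
    intro avail x hcard hx o
    have : avail = ∅ := Finset.card_eq_zero.1 (Nat.le_zero.1 hcard)
    subst this
    simp [psAux]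
  | succ fuel ih =>
    intro avail x hcard hx o
    by_cases h : avail.Nonempty
    · have hc := candsD_nonempty n rank hn avail h
      rw [psAux_step n rank fuel avail x h hc]
      rw [Finset.sum_add_distrib]
      have h1 : ∑ i, (if favD n rank avail i = o then TD n rank avail x else 0)
          = (rateD n rank avail o : ℝ) * TD n rank avail x := by
        rw [← Finset.sum_filter, Finset.sum_const, nsmul_eq_mul]
        rfl
      have h2 : ∑ i, psAux n rank fuel (nextAvailD n rank avail x) (newxD n rank avail x) i o
          = if o ∈ nextAvailD n rank avail x then newxD n rank avail x o else 0 :=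
        ih _ _ (Nat.lt_succ_iff.1 (lt_of_lt_of_le (nextAvailD_card n rank avail x hc) hcard))
          (fun o' ho' => (Finset.mem_filter.1 ho').2) o
      rw [h1, h2]
      by_cases ho : o ∈ avail
      · rw [if_pos ho]
        by_cases hno : o ∈ nextAvailD n rank avail x
        · rw [if_pos hno]
          have : newxD n rank avail x o = x o - TD n rank avail x * (rateD n rank avail o : ℝ) := rfl
          rw [this]; ring
        · rw [if_neg hno]
          have hge := newxD_nonneg n rank avail x hx hc o ho
          have hle : ¬ 0 < newxD n rank avail x o := fun hpos =>
            hno (Finset.mem_filter.2 ⟨ho, hpos⟩)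
          have h0 : newxD n rank avail x o = 0 := le_antisymm (not_lt.1 hle) hge
          have h0' : x o - TD n rank avail x * (rateD n rank avail o : ℝ) = 0 := h0
          linarith
      · have hsub : nextAvailD n rank avail x ⊆ avail := Finset.filter_subset _ _
        have hno' : o ∉ nextAvailD n rank avail x := fun hmem => ho (hsub hmem)
        rw [if_neg ho, if_neg hno']
        rw [rateD_eq_zero n rank avail h o ho]
        simp
    · rw [psAux_not_nonempty n rank fuel avail x h,
        Finset.not_nonempty_iff_eq_empty.1 h]
      simp

lemma psAux_prefix (hn3 : 3 ≤ n) :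
    ∀ (fuel : ℕ) (avail : Finset (Fin n)) (x : Fin n → ℝ), avail.card ≤ fuel →
      avail.Nonempty → (∀ o ∈ avail, x o = 1) →
      (∀ i o, o ∈ avail → psAux n rank fuel avail x i o = 1/n) ∨
      ∃ (B : Finset (Fin n)) (f : Fin n → Fin n),
        B ⊆ avail ∧ (∀ i, f i ∈ avail \ B) ∧
        (∀ i, ∀ b ∈ B, ∀ a ∈ avail \ B, rank i b < rank i a) ∧
        (∀ i, ∀ a ∈ avail \ B, rank i (f i) ≤ rank i a) ∧
        (∀ i, ∀ b ∈ B, psAux n rank fuel avail x i b = 1/n) ∧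
        (∀ i, 1/((n:ℝ)-1) ≤ psAux n rank fuel avail x i (f i)) := by
  have hn : 0 < n := by omega
  intro fuel
  induction fuel with
  | zero =>
    intro avail x hcard hne hx1
    exact absurd (Finset.card_eq_zero.1 (Nat.le_zero.1 hcard)) hne.ne_empty
  | succ fuel ih =>
    intro avail x hcard h hx1
    have hc := candsD_nonempty n rank hn avail h
    have hstep : ∀ i o, psAux n rank (fuel+1) avail x i o =
        (if favD n rank avail i = o then TD n rank avail x else 0) +
          psAux n rank fuel (nextAvailD n rank avail x) (newxD n rank avail x) i o := by
      intro i o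
      rw [psAux_step n rank fuel avail x h hc]
    by_cases hagree : ∀ i i' : Fin n, favD n rank avail i = favD n rank avail i'
    · -- all agents agree on favourite
      set oS := favD n rank avail ⟨0, hn⟩ with hoSdef
      have hfavAll : ∀ i, favD n rank avail i = oS := fun i => hagree i ⟨0, hn⟩
      have hoSav : oS ∈ avail := favD_mem n rank avail h _
      have hrateS : rateD n rank avail oS = n := by
        rw [rateD, Finset.filter_true_of_mem (fun i _ => hfavAll i)]
        simp
      have hrate0 : ∀ o, o ≠ oS → rateD n rank avail o = 0 := by
        intro o hne
        rw [rateD, Finset.card_eq_zero, Finset.filter_eq_empty_iff]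
        intro i _ heq
        rw [hfavAll i] at heq
        exact hne heq.symm
      have hTD : TD n rank avail x = 1/n := by
        obtain ⟨o, ho, he⟩ := TD_mem n rank avail x hc
        have hox : o = oS := by
          by_contra hne
          have hpos := (Finset.mem_filter.1 ho).2
          rw [hrate0 o hne] at hpos
          exact absurd hpos (lt_irrefl 0)
        rw [hox] at he
        rw [he, hrateS, hx1 oS hoSav]
      have hnewx : ∀ o, o ≠ oS → newxD n rank avail x o = x o := by
        intro o hne
        simp [newxD, hrate0 o hne]
      have hnewxS : newxD n rank avail x oS = 0 := by
        have hnn : (n:ℝ) ≠ 0 := by positivity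
        rw [newxD, hrateS, hTD, hx1 oS hoSav]
        field_simp
        norm_num
      have hnext : nextAvailD n rank avail x = avail.erase oS := by
        ext o
        constructor
        · intro hmem
          obtain ⟨hav, hpos⟩ := Finset.mem_filter.1 hmem
          refine Finset.mem_erase.2 ⟨?_, hav⟩
          rintro rfl
          rw [hnewxS] at hpos
          exact lt_irrefl _ hpos
        · intro hmem
          obtain ⟨hne2, hav⟩ := Finset.mem_erase.1 hmem
          refine Finset.mem_filter.2 ⟨hav, ?_⟩
          rw [hnewx o hne2, hx1 o hav]
          norm_num
      have hzeroS : psAux n rank fuel (nextAvailD n rank avail x) (newxD n rank avail x) ⟨0,hn⟩ oS = 0 := by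
        exact psAux_zero_out n rank hn fuel _ _ oS (by rw [hnext]; simp) ⟨0,hn⟩
      have hzeroS' : ∀ i, psAux n rank fuel (nextAvailD n rank avail x) (newxD n rank avail x) i oS = 0 :=
        fun i => psAux_zero_out n rank hn fuel _ _ oS (by rw [hnext]; simp) i
      by_cases hne : (avail.erase oS).Nonempty
      · have hcard' : (nextAvailD n rank avail x).card ≤ fuel := by
          rw [hnext, Finset.card_erase_of_mem hoSav]
          omega
        have hx1' : ∀ o ∈ nextAvailD n rank avail x, newxD n rank avail x o = 1 := by
          intro o ho
          rw [hnext] at ho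
          obtain ⟨hne2, hav⟩ := Finset.mem_erase.1 ho
          rw [hnewx o hne2]
          exact hx1 o hav
        have IH := ih (nextAvailD n rank avail x) (newxD n rank avail x) hcard'
          (by rw [hnext]; exact hne) hx1'
        rcases IH with IH1 | ⟨B, f, hBsub, hfmem, hBlt, hfle, hBval, hfval⟩
        · left
          intro i o ho
          rw [hstep i o]
          by_cases hoo : o = oS
          · subst hoo
            rw [if_pos (hfavAll i), hTD, hzeroS' i, add_zero]
          · have : favD n rank avail i ≠ o := by rw [hfavAll i]; exact fun hco => hoo hco.symm
            rw [if_neg this, zero_add]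
            exact IH1 i o (by rw [hnext]; exact Finset.mem_erase.2 ⟨hoo, ho⟩)
        · right
          have hBsub' : B ⊆ avail.erase oS := by rw [hnext] at hBsub; exact hBsub
          have hoSnotB : oS ∉ B := fun hmem => (Finset.mem_erase.1 (hBsub' hmem)).1 rfl
          have hsetEq : avail \ insert oS B = nextAvailD n rank avail x \ B := by
            rw [hnext]
            ext a
            simp only [Finset.mem_sdiff, Finset.mem_insert, Finset.mem_erase, not_or]
            tauto
          refine ⟨insert oS B, f, ?_, ?_, ?_, ?_, ?_, ?_⟩
          · exact Finset.insert_subset_iff.2 ⟨hoSav, hBsub'.trans (Finset.erase_subset _ _)⟩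
          · intro i; rw [hsetEq]; exact hfmem i
          · intro i b hb a ha
            rw [hsetEq] at ha
            rcases Finset.mem_insert.1 hb with hbS | hbB
            · subst hbS
              have haav : a ∈ avail := by
                have := (Finset.mem_sdiff.1 ha).1
                rw [hnext] at this
                exact (Finset.mem_erase.1 this).2
              have hanes : a ≠ oS := by
                have := (Finset.mem_sdiff.1 ha).1
                rw [hnext] at this
                exact (Finset.mem_erase.1 this).1
              have := favD_lt n rank avail h i a haav (by rw [hfavAll i]; exact hanes)
              rw [hfavAll i] at this
              exact this
            · exact hBlt i b hbB a ha
          · intro i a ha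
            rw [hsetEq] at ha
            exact hfle i a ha
          · intro i b hb
            rw [hstep i b]
            rcases Finset.mem_insert.1 hb with hbS | hbB
            · subst hbS
              rw [if_pos (hfavAll i), hTD, hzeroS' i, add_zero]
            · have hbna : favD n rank avail i ≠ b := by
                rw [hfavAll i]
                rintro rfl
                exact hoSnotB hbB
              rw [if_neg hbna, zero_add]
              exact hBval i b hbB
          · intro i
            rw [hstep i (f i)]
            have hfne : favD n rank avail i ≠ f i := by
              rw [hfavAll i]
              have := (Finset.mem_sdiff.1 (hfmem i)).1
              rw [hnext] at this
              exact fun hco => (Finset.mem_erase.1 this).1 hco.symm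
            rw [if_neg hfne, zero_add]
            exact hfval i
      · -- avail = {oS}
        left
        intro i o ho
        have hav : avail = {oS} := by
          apply Finset.eq_singleton_iff_unique_mem.2
          refine ⟨hoSav, fun a ha => ?_⟩
          by_contra hanes
          exact hne ⟨a, Finset.mem_erase.2 ⟨hanes, ha⟩⟩
        have hooS : o = oS := by rw [hav] at ho; exact Finset.mem_singleton.1 ho
        subst hooS
        rw [hstep i oS, if_pos (hfavAll i), hTD, hzeroS' i, add_zero]
    · -- disagreement at this level
      right
      push_neg at hagree
      obtain ⟨j, j', hjj⟩ := hagree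
      have hT : 1/((n:ℝ)-1) ≤ TD n rank avail x := by
        obtain ⟨o, ho, he⟩ := TD_mem n rank avail x hc
        obtain ⟨hoav, hrpos⟩ := Finset.mem_filter.1 ho
        have hrle : rateD n rank avail o ≤ n - 1 := by
          have hle : rateD n rank avail o ≤ n := by
            have := Finset.card_filter_le (Finset.univ : Finset (Fin n))
              (fun i => favD n rank avail i = o)
            simpa [rateD] using this
          have hneq : rateD n rank avail o ≠ n := by
            intro heq
            have huniv : (Finset.univ.filter fun i => favD n rank avail i = o) = Finset.univ := by
              apply Finset.eq_univ_of_card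
              rw [← rateD]; · rw [heq]; simp
            have hj : favD n rank avail j = o := by
              have := Finset.mem_univ j
              rw [← huniv] at this
              exact (Finset.mem_filter.1 this).2
            have hj' : favD n rank avail j' = o := by
              have := Finset.mem_univ j'
              rw [← huniv] at this
              exact (Finset.mem_filter.1 this).2
            exact hjj (hj.trans hj'.symm)
          omega
        have hc1 : (0:ℝ) < (rateD n rank avail o : ℝ) := by exact_mod_cast hrpos
        have hc2 : (rateD n rank avail o : ℝ) ≤ (n:ℝ) - 1 := by
          have : ((n - 1 : ℕ) : ℝ) = (n:ℝ) - 1 := by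
            rw [Nat.cast_sub (by omega)]; simp
          rw [← this]
          exact_mod_cast hrle
        rw [he, hx1 o hoav]
        exact one_div_le_one_div_of_le hc1 hc2
      refine ⟨∅, favD n rank avail, Finset.empty_subset _, ?_, ?_, ?_, ?_, ?_⟩
      · intro i
        rw [Finset.sdiff_empty]
        exact favD_mem n rank avail h i
      · intro i b hb
        exact absurd hb (Finset.notMem_empty b)
      · intro i a ha
        rw [Finset.sdiff_empty] at ha
        exact favD_min n rank avail h i a ha
      · intro i b hb
        exact absurd hb (Finset.notMem_empty b)
      · intro i
        rw [hstep i _, if_pos rfl]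
        have hrec : 0 ≤ psAux n rank fuel (nextAvailD n rank avail x) (newxD n rank avail x) i
            (favD n rank avail i) :=
          psAux_nonneg n rank hn fuel _ _ (fun o' ho' => (Finset.mem_filter.1 ho').2) i _
        linarith

end PS

namespace PS

lemma psMatrix_mem_DS (n : ℕ) (rank : Fin n → Equiv.Perm (Fin n)) (hn : 0 < n) :
    (Matrix.of (psMatrix n rank)) ∈ doublyStochastic ℝ (Fin n) := by
  rw [mem_doublyStochastic_iff_sum]
  have hcard : (Finset.univ : Finset (Fin n)).card ≤ n := by simp
  have hx : ∀ o ∈ (Finset.univ : Finset (Fin n)), (0:ℝ) < (fun _ => (1:ℝ)) o :=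
    fun _ _ => one_pos
  have hnn : (n:ℝ) ≠ 0 := by positivity
  refine ⟨fun i o => PS.psAux_nonneg n rank hn n _ _ hx i o, fun i => ?_, fun o => ?_⟩
  · show ∑ o, psAux n rank n Finset.univ (fun _ => 1) i o = 1
    rw [PS.psAux_row n rank hn n _ _ hcard hx i]
    simp
    omega
  · show ∑ i, psAux n rank n Finset.univ (fun _ => 1) i o = 1
    rw [PS.psAux_col n rank hn n _ _ hcard hx o]
    simp

lemma perm_fiber_card (n : ℕ) (i o : Fin n) :
    (n : ℝ) * ((Finset.univ.filter (fun σ : Equiv.Perm (Fin n) => σ i = o)).card : ℝ)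
      = (n.factorial : ℝ) := by
  classical
  set c : Fin n → ℕ := fun o' => (Finset.univ.filter (fun σ : Equiv.Perm (Fin n) => σ i = o')).card with hc
  have hfib : ∀ o', c o' = c o := by
    intro o'
    refine Finset.card_bij' (fun σ _ => (Equiv.swap o' o) * σ) (fun σ _ => (Equiv.swap o' o).symm * σ)
      ?_ ?_ ?_ ?_
    · intro σ hσ
      simp only [Finset.mem_filter, Finset.mem_univ, true_and] at hσ ⊢
      rw [Equiv.Perm.mul_apply, hσ, Equiv.swap_apply_left]
    · intro σ hσ
      simp only [Finset.mem_filter, Finset.mem_univ, true_and] at hσ ⊢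
      rw [Equiv.Perm.mul_apply, hσ]
      simp [Equiv.swap_apply_right]
    · intro σ _; simp [mul_assoc]
    · intro σ _; simp [mul_assoc]
  have hsum : ∑ o' : Fin n, c o' = n.factorial := by
    have h := Finset.card_eq_sum_card_fiberwise
      (s := (Finset.univ : Finset (Equiv.Perm (Fin n)))) (t := Finset.univ)
      (f := fun σ => σ i) (fun x _ => Finset.mem_univ _)
    rw [Finset.card_univ, Fintype.card_perm, Fintype.card_fin] at h
    exact h.symm
  have : ∑ _o' : Fin n, c o = n.factorial := by
    rw [← hsum]
    exact Finset.sum_congr rfl (fun o' _ => (hfib o').symm)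
  rw [Finset.sum_const, Finset.card_univ, Fintype.card_fin, smul_eq_mul] at this
  exact_mod_cast this

end PS

namespace PS

lemma marginal_eq (n : ℕ) (rank : Fin n → Equiv.Perm (Fin n)) (hn : 0 < n)
    (w : Equiv.Perm (Fin n) → ℝ)
    (hwsum : ∑ σ : Equiv.Perm (Fin n), w σ • σ.permMatrix ℝ = Matrix.of (psMatrix n rank)) :
    ∀ i o, ∑ σ ∈ Finset.univ.filter (fun σ : Equiv.Perm (Fin n) => σ i = o), w σ
      = psMatrix n rank i o := by
  intro i o
  have h2 := congrFun (congrFun hwsum i) o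
  simp only [Matrix.sum_apply, Matrix.smul_apply, smul_eq_mul, Equiv.Perm.permMatrix,
    PEquiv.toMatrix_apply, Equiv.toPEquiv_apply, Option.mem_def, Option.some.injEq,
    mul_ite, mul_one, mul_zero, Matrix.of_apply] at h2
  rw [Finset.sum_filter]
  rw [← h2]

lemma uniform_decomposition (n : ℕ) (rank : Fin n → Equiv.Perm (Fin n)) (hn3 : 3 ≤ n)
    (H : ∀ i o : Fin n, psMatrix n rank i o = 1/n) :
    ∃ w : Equiv.Perm (Fin n) → ℝ, IsDecomposition n (psMatrix n rank) w ∧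
      ∀ i i' : Fin n, i ≠ i' →
        envyProb n rank w i i' ≤ ((n : ℝ) - 2) / ((n : ℝ) - 1) := by
  classical
  have hn : 0 < n := by omega
  have hfpos : (0:ℝ) < (n.factorial : ℝ) := by exact_mod_cast n.factorial_pos
  have hnne : (n:ℝ) ≠ 0 := by positivity
  have hn3R : (3:ℝ) ≤ (n:ℝ) := by exact_mod_cast hn3
  refine ⟨fun _ => (n.factorial : ℝ)⁻¹, ⟨fun σ => by positivity, ?_, ?_⟩, ?_⟩
  · rw [Finset.sum_const, Finset.card_univ, Fintype.card_perm, Fintype.card_fin, nsmul_eq_mul]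
    field_simp
  · intro i o
    rw [Finset.sum_const, nsmul_eq_mul, H i o]
    have hcc := perm_fiber_card n i o
    field_simp
    linarith [hcc]
  · intro i i' hii
    set E := Finset.univ.filter
      (fun σ : Equiv.Perm (Fin n) => rank i (σ i') < rank i (σ i)) with hEdef
    set E' := Finset.univ.filter
      (fun σ : Equiv.Perm (Fin n) => rank i (σ i) < rank i (σ i')) with hE'def
    have hEE' : E.card = E'.card := by
      refine Finset.card_bij' (fun σ _ => σ * Equiv.swap i i') (fun σ _ => σ * Equiv.swap i i')
        ?_ ?_ ?_ ?_
      · intro σ hσ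
        simp only [hEdef, hE'def, Finset.mem_filter, Finset.mem_univ, true_and,
          Equiv.Perm.mul_apply, Equiv.swap_apply_left, Equiv.swap_apply_right] at hσ ⊢
        exact hσ
      · intro σ hσ
        simp only [hEdef, hE'def, Finset.mem_filter, Finset.mem_univ, true_and,
          Equiv.Perm.mul_apply, Equiv.swap_apply_left, Equiv.swap_apply_right] at hσ ⊢
        exact hσ
      · intro σ _
        simp only [mul_assoc, Equiv.swap_mul_self, mul_one]
      · intro σ _
        simp only [mul_assoc, Equiv.swap_mul_self, mul_one]
    have hsplit : E.card + E'.card = n.factorial := by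
      have h := Finset.card_filter_add_card_filter_not
        (s := (Finset.univ : Finset (Equiv.Perm (Fin n))))
        (p := fun σ : Equiv.Perm (Fin n) => rank i (σ i') < rank i (σ i))
      have hneg : (Finset.univ.filter
          (fun σ : Equiv.Perm (Fin n) => ¬ rank i (σ i') < rank i (σ i))) = E' := by
        refine Finset.filter_congr (fun σ _ => ?_)
        have hne2 : rank i (σ i) ≠ rank i (σ i') :=
          fun heq => hii (σ.injective ((rank i).injective heq))
        constructor
        · intro hnl
          exact lt_of_le_of_ne (not_lt.1 hnl) hne2
        · intro hlt
          exact not_lt.2 hlt.le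
      rw [hneg] at h
      rw [h, Finset.card_univ, Fintype.card_perm, Fintype.card_fin]
    have hcardE : 2 * E.card = n.factorial := by omega
    show ∑ _σ ∈ E, (n.factorial : ℝ)⁻¹ ≤ ((n : ℝ) - 2) / ((n : ℝ) - 1)
    rw [Finset.sum_const, nsmul_eq_mul]
    have hval : (E.card : ℝ) * (n.factorial : ℝ)⁻¹ = 1/2 := by
      have : (2:ℝ) * E.card = (n.factorial : ℝ) := by exact_mod_cast hcardE
      field_simp
      linarith
    rw [hval]
    rw [div_le_div_iff₀ (by norm_num) (by linarith)]
    linarith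

lemma birkhoff_decomposition (n : ℕ) (rank : Fin n → Equiv.Perm (Fin n)) (hn3 : 3 ≤ n)
    (B : Finset (Fin n)) (f : Fin n → Fin n)
    (hfmem : ∀ i, f i ∈ Finset.univ \ B)
    (hBlt : ∀ i, ∀ b ∈ B, ∀ a ∈ Finset.univ \ B, rank i b < rank i a)
    (hfle : ∀ i, ∀ a ∈ Finset.univ \ B, rank i (f i) ≤ rank i a)
    (hBval : ∀ i, ∀ b ∈ B, psMatrix n rank i b = 1/n)
    (hfval : ∀ i, 1/((n:ℝ)-1) ≤ psMatrix n rank i (f i)) :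
    ∃ w : Equiv.Perm (Fin n) → ℝ, IsDecomposition n (psMatrix n rank) w ∧
      ∀ i i' : Fin n, i ≠ i' →
        envyProb n rank w i i' ≤ ((n : ℝ) - 2) / ((n : ℝ) - 1) := by
  classical
  have hn : 0 < n := by omega
  have hn3R : (3:ℝ) ≤ (n:ℝ) := by exact_mod_cast hn3
  have hnne : (n:ℝ) ≠ 0 := by positivity
  have hne1 : (n:ℝ) - 1 ≠ 0 := by linarith
  obtain ⟨w, hw0, hw1, hwsum⟩ :=
    exists_eq_sum_perm_of_mem_doublyStochastic (psMatrix_mem_DS n rank hn)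
  have hmarg := marginal_eq n rank hn w hwsum
  refine ⟨w, ⟨hw0, hw1, hmarg⟩, ?_⟩
  intro i i' hii
  have fNotB : f i ∉ B := (Finset.mem_sdiff.1 (hfmem i)).2
  set X := Finset.univ.filter (fun σ : Equiv.Perm (Fin n) => σ i ∈ B) with hXdef
  set Y := Finset.univ.filter (fun σ : Equiv.Perm (Fin n) => σ i = f i) with hYdef
  set Z := Finset.univ.filter (fun σ : Equiv.Perm (Fin n) => σ i' ∈ B) with hZdef
  set E := Finset.univ.filter
    (fun σ : Equiv.Perm (Fin n) => rank i (σ i') < rank i (σ i)) with hEdef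
  set A1 := X.filter (fun σ => σ i' ∉ B) with hA1def
  set XZ := X.filter (fun σ => σ i' ∈ B) with hXZdef
  set A2 := Y.filter (fun σ => σ i' ∉ B) with hA2def
  set YZ := Y.filter (fun σ => σ i' ∈ B) with hYZdef
  -- fiber sums
  have fiber_val : ∀ (k : Fin n) (S : Finset (Equiv.Perm (Fin n))),
      S = Finset.univ.filter (fun σ : Equiv.Perm (Fin n) => σ k ∈ B) →
      ∑ σ ∈ S, w σ = (B.card : ℝ) / n := by
    intro k S hS
    have hmap : ∀ σ ∈ S, σ k ∈ B := by
      intro σ hσ; rw [hS] at hσ; exact (Finset.mem_filter.1 hσ).2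
    have h := Finset.sum_fiberwise_of_maps_to (g := fun σ => σ k) hmap w
    rw [← h]
    have hper : ∀ b ∈ B, ∑ σ ∈ S.filter (fun σ => σ k = b), w σ = 1/n := by
      intro b hb
      have hSb : S.filter (fun σ => σ k = b)
          = Finset.univ.filter (fun σ : Equiv.Perm (Fin n) => σ k = b) := by
        rw [hS]
        ext σ
        simp only [Finset.mem_filter, Finset.mem_univ, true_and]
        constructor
        · rintro ⟨_, h2⟩; exact h2
        · intro h2; exact ⟨h2 ▸ hb, h2⟩
      rw [hSb, hmarg k b, hBval k b hb]
    rw [Finset.sum_congr rfl hper, Finset.sum_const, nsmul_eq_mul]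
    ring
  have hXval : ∑ σ ∈ X, w σ = (B.card : ℝ) / n := fiber_val i X hXdef
  have hZval : ∑ σ ∈ Z, w σ = (B.card : ℝ) / n := fiber_val i' Z hZdef
  have hYval : ∑ σ ∈ Y, w σ = psMatrix n rank i (f i) := hmarg i (f i)
  -- splits
  have hXsplit : ∑ σ ∈ XZ, w σ + ∑ σ ∈ A1, w σ = ∑ σ ∈ X, w σ := by
    rw [hXZdef, hA1def]
    exact Finset.sum_filter_add_sum_filter_not X (fun σ => σ i' ∈ B) w
  have hYsplit : ∑ σ ∈ YZ, w σ + ∑ σ ∈ A2, w σ = ∑ σ ∈ Y, w σ := by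
    rw [hYZdef, hA2def]
    exact Finset.sum_filter_add_sum_filter_not Y (fun σ => σ i' ∈ B) w
  -- XZ, YZ inside Z, disjoint
  have hXZsub : XZ ⊆ Z := by
    intro σ hσ
    rw [hXZdef] at hσ
    rw [hZdef]
    exact Finset.mem_filter.2 ⟨Finset.mem_univ _, (Finset.mem_filter.1 hσ).2⟩
  have hYZsub : YZ ⊆ Z := by
    intro σ hσ
    rw [hYZdef] at hσ
    rw [hZdef]
    exact Finset.mem_filter.2 ⟨Finset.mem_univ _, (Finset.mem_filter.1 hσ).2⟩
  have hdisjXY : Disjoint XZ YZ := by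
    rw [Finset.disjoint_left]
    intro σ h1 h2
    have hiB : σ i ∈ B := (Finset.mem_filter.1 ((Finset.filter_subset _ _) h1)).2
    have hif : σ i = f i := (Finset.mem_filter.1 ((Finset.filter_subset _ _) h2)).2
    rw [hif] at hiB
    exact fNotB hiB
  have hZbound : ∑ σ ∈ XZ, w σ + ∑ σ ∈ YZ, w σ ≤ ∑ σ ∈ Z, w σ := by
    rw [← Finset.sum_union hdisjXY]
    exact Finset.sum_le_sum_of_subset_of_nonneg (Finset.union_subset hXZsub hYZsub)
      (fun σ _ _ => hw0 σ)
  have key : 1/((n:ℝ)-1) ≤ ∑ σ ∈ A1, w σ + ∑ σ ∈ A2, w σ := by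
    have := hfval i
    linarith
  -- disjointness with E
  have hdisjA12 : Disjoint A1 A2 := by
    rw [Finset.disjoint_left]
    intro σ h1 h2
    have hiB : σ i ∈ B := (Finset.mem_filter.1 ((Finset.filter_subset _ _) h1)).2
    have hif : σ i = f i := (Finset.mem_filter.1 ((Finset.filter_subset _ _) h2)).2
    rw [hif] at hiB
    exact fNotB hiB
  have hEA1 : Disjoint E A1 := by
    rw [Finset.disjoint_left]
    intro σ hE1 hA1'
    have hlt : rank i (σ i') < rank i (σ i) := by
      rw [hEdef] at hE1; exact (Finset.mem_filter.1 hE1).2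
    have hiB : σ i ∈ B := (Finset.mem_filter.1 ((Finset.filter_subset _ _) hA1')).2
    have hi'nB : σ i' ∉ B := by
      rw [hA1def] at hA1'; exact (Finset.mem_filter.1 hA1').2
    have := hBlt i (σ i) hiB (σ i') (Finset.mem_sdiff.2 ⟨Finset.mem_univ _, hi'nB⟩)
    exact absurd hlt (not_lt.2 this.le)
  have hEA2 : Disjoint E A2 := by
    rw [Finset.disjoint_left]
    intro σ hE1 hA2'
    have hlt : rank i (σ i') < rank i (σ i) := by
      rw [hEdef] at hE1; exact (Finset.mem_filter.1 hE1).2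
    have hif : σ i = f i := (Finset.mem_filter.1 ((Finset.filter_subset _ _) hA2')).2
    have hi'nB : σ i' ∉ B := by
      rw [hA2def] at hA2'; exact (Finset.mem_filter.1 hA2').2
    have hi'nf : σ i' ≠ f i := by
      intro heq
      exact hii (σ.injective (heq.trans hif.symm)).symm
    have hle := hfle i (σ i') (Finset.mem_sdiff.2 ⟨Finset.mem_univ _, hi'nB⟩)
    have hstrict : rank i (f i) < rank i (σ i') :=
      lt_of_le_of_ne hle (fun heq => hi'nf ((rank i).injective heq).symm)
    rw [hif] at hlt
    exact absurd hlt (not_lt.2 hstrict.le)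
  have hEA : Disjoint E (A1 ∪ A2) := Finset.disjoint_union_right.2 ⟨hEA1, hEA2⟩
  have hbound : ∑ σ ∈ E, w σ + (∑ σ ∈ A1, w σ + ∑ σ ∈ A2, w σ) ≤ 1 := by
    rw [← Finset.sum_union hdisjA12, ← Finset.sum_union hEA, ← hw1]
    exact Finset.sum_le_sum_of_subset_of_nonneg (Finset.subset_univ _)
      (fun σ _ _ => hw0 σ)
  have heq : ((n:ℝ)-2)/((n:ℝ)-1) = 1 - 1/((n:ℝ)-1) := by
    field_simp
    ring
  show ∑ σ ∈ E, w σ ≤ ((n : ℝ) - 2) / ((n : ℝ) - 1)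
  rw [heq]
  linarith

end PS

/-- Proposition 3: for n ≥ 3 agents, the Probabilistic Serial assignment
matrix admits a decomposition such that every agent envies every other agent with
probability at most (n−2)/(n−1). -/
theorem ps_matrix_envy_bounded_decomposition (n : ℕ) (hn : 3 ≤ n)
    (rank : Fin n → Equiv.Perm (Fin n)) :
    ∃ w : Equiv.Perm (Fin n) → ℝ, IsDecomposition n (psMatrix n rank) w ∧
      ∀ i i' : Fin n, i ≠ i' →
        envyProb n rank w i i' ≤ ((n : ℝ) - 2) / ((n : ℝ) - 1) := by
  have hn0 : 0 < n := by omega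
  have hcard : (Finset.univ : Finset (Fin n)).card ≤ n := by simp
  have hne : (Finset.univ : Finset (Fin n)).Nonempty :=
    ⟨⟨0, hn0⟩, Finset.mem_univ _⟩
  have hx1 : ∀ o ∈ (Finset.univ : Finset (Fin n)), (fun _ => (1:ℝ)) o = 1 := fun _ _ => rfl
  rcases PS.psAux_prefix n rank hn n Finset.univ (fun _ => 1) hcard hne hx1 with
    H | ⟨B, f, _hBsub, hfmem, hBlt, hfle, hBval, hfval⟩
  · exact PS.uniform_decomposition n rank hn (fun i o => H i o (Finset.mem_univ o))
  · exact PS.birkhoff_decomposition n rank hn B f hfmem hBlt hfle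
      (fun i b hb => hBval i b hb) hfval
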